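/- Let m > 0 and c > 0, and let U be a locally finite Borel measure on [0,∞) satisfying the Blackwell renewal property with mean m: for every h > 0, U((t, t+h]) → h/m as t → ∞. Then e^{−c x} ∫_{[0,x]} e^{c y} U(dy) → 1/(c·m) as x → ∞. -/

import Mathlib

open Filter Topology MeasureTheory Set

section BlackwellAux

variable {c : ℝ} (U : Measure ℝ) [IsLocallyFiniteMeasure U]

lemma bw_intOn_Icc (c a b : ℝ) :
    IntegrableOn (fun y => Real.exp (c * y)) (Icc a b) U :=
  (Continuous.continuousOn (by continuity)).integrableOn_Icc

lemma bw_intOn_Ioc (c a b : ℝ) :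
    IntegrableOn (fun y => Real.exp (c * y)) (Ioc a b) U :=
  (bw_intOn_Icc U c a b).mono_set Ioc_subset_Icc_self

lemma bw_fin_Icc (a b : ℝ) : U (Icc a b) < ⊤ := isCompact_Icc.measure_lt_top

lemma bw_fin_Ioc (a b : ℝ) : U (Ioc a b) < ⊤ :=
  lt_of_le_of_lt (measure_mono Ioc_subset_Icc_self) (bw_fin_Icc U a b)

lemma bw_int_Ioc_le (hc : 0 < c) {a b : ℝ} :
    ∫ y in Ioc a b, Real.exp (c * y) ∂U ≤ Real.exp (c * b) * (U (Ioc a b)).toReal := by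
  calc ∫ y in Ioc a b, Real.exp (c * y) ∂U ≤ ∫ _y in Ioc a b, Real.exp (c * b) ∂U := by
        apply setIntegral_mono_on (bw_intOn_Ioc U c a b)
          (integrableOn_const (bw_fin_Ioc U a b).ne) measurableSet_Ioc
        intro y hy
        exact Real.exp_le_exp.2 (mul_le_mul_of_nonneg_left hy.2 hc.le)
    _ = Real.exp (c * b) * (U (Ioc a b)).toReal := by
        rw [setIntegral_const, smul_eq_mul, mul_comm]; rfl

lemma bw_le_int_Ioc (hc : 0 < c) {a b : ℝ} :
    Real.exp (c * a) * (U (Ioc a b)).toReal ≤ ∫ y in Ioc a b, Real.exp (c * y) ∂U := by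
  calc Real.exp (c * a) * (U (Ioc a b)).toReal = ∫ _y in Ioc a b, Real.exp (c * a) ∂U := by
        rw [setIntegral_const, smul_eq_mul, mul_comm]; rfl
    _ ≤ ∫ y in Ioc a b, Real.exp (c * y) ∂U := by
        apply setIntegral_mono_on (integrableOn_const (bw_fin_Ioc U a b).ne)
          (bw_intOn_Ioc U c a b) measurableSet_Ioc
        intro y hy
        exact Real.exp_le_exp.2 (mul_le_mul_of_nonneg_left hy.1.le hc.le)

lemma bw_int_Icc_le (hc : 0 < c) {b : ℝ} (hb : 0 ≤ b) :
    ∫ y in Icc 0 b, Real.exp (c * y) ∂U ≤ Real.exp (c * b) * (U (Icc 0 b)).toReal := by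
  calc ∫ y in Icc 0 b, Real.exp (c * y) ∂U ≤ ∫ _y in Icc 0 b, Real.exp (c * b) ∂U := by
        apply setIntegral_mono_on (bw_intOn_Icc U c 0 b)
          (integrableOn_const (bw_fin_Icc U 0 b).ne) measurableSet_Icc
        intro y hy
        exact Real.exp_le_exp.2 (mul_le_mul_of_nonneg_left hy.2 hc.le)
    _ = Real.exp (c * b) * (U (Icc 0 b)).toReal := by
        rw [setIntegral_const, smul_eq_mul, mul_comm]; rfl

lemma bw_split (c : ℝ) {h x : ℝ} (hh : 0 ≤ h) (hx : 0 ≤ x - h) :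
    ∫ y in Icc 0 x, Real.exp (c * y) ∂U
      = (∫ y in Icc 0 (x - h), Real.exp (c * y) ∂U)
        + ∫ y in Ioc (x - h) x, Real.exp (c * y) ∂U := by
  have hxx : x - h ≤ x := by linarith
  rw [← Set.Icc_union_Ioc_eq_Icc hx hxx]
  apply setIntegral_union _ measurableSet_Ioc (bw_intOn_Icc U c 0 (x - h))
    (bw_intOn_Ioc U c (x - h) x)
  rw [Set.disjoint_left]
  rintro y ⟨_, h1⟩ ⟨h2, _⟩
  linarith

end BlackwellAux

/-- Let `m > 0` and `c > 0`, and let `U` be a locally finite Borel measure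
on `[0,∞)` (i.e. a measure on `ℝ` giving no mass to `(-∞,0)`) satisfying the Blackwell
renewal property with mean `m`: for every `h > 0`, `U((t, t+h]) → h/m as `t → ∞`.
Then `e^{-c x} ∫_{[0,x]} e^{c y} U(dy) → 1/(c·m)` as `x → ∞`. -/
theorem blackwell_exponential_renewal_limit
    (m c : ℝ) (hm : 0 < m) (hc : 0 < c)
    (U : Measure ℝ) [IsLocallyFiniteMeasure U]
    (hU0 : U (Set.Iio 0) = 0)
    (hBlackwell : ∀ h : ℝ, 0 < h →
      Tendsto (fun t : ℝ => (U (Set.Ioc t (t + h))).toReal) atTop (𝓝 (h / m))) :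
    Tendsto (fun x : ℝ => Real.exp (-(c * x)) * ∫ y in Set.Icc 0 x, Real.exp (c * y) ∂U)
      atTop (𝓝 (1 / (c * m))) := by
  set g : ℝ → ℝ :=
    fun x => Real.exp (-(c * x)) * ∫ y in Set.Icc 0 x, Real.exp (c * y) ∂U with hgdef
  -- nonnegativity of g
  have hg0 : ∀ x, 0 ≤ g x := by
    intro x
    exact mul_nonneg (Real.exp_pos _).le
      (setIntegral_nonneg measurableSet_Icc fun y _ => (Real.exp_pos _).le)
  -- the basic recursion
  have hsplit : ∀ h x : ℝ, 0 ≤ h → 0 ≤ x - h →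
      g x = Real.exp (-(c * h)) * g (x - h)
        + Real.exp (-(c * x)) * ∫ y in Set.Ioc (x - h) x, Real.exp (c * y) ∂U := by
    intro h x hh hx
    simp only [hgdef]
    rw [bw_split U c hh hx, mul_add, ← mul_assoc, ← Real.exp_add]
    ring_nf
  -- the upper bound on the remainder
  have hrem_le : ∀ h x : ℝ,
      Real.exp (-(c * x)) * (∫ y in Set.Ioc (x - h) x, Real.exp (c * y) ∂U)
        ≤ (U (Set.Ioc (x - h) x)).toReal := by
    intro h x
    have := bw_int_Ioc_le U hc (a := x - h) (b := x)
    calc Real.exp (-(c * x)) * (∫ y in Set.Ioc (x - h) x, Real.exp (c * y) ∂U)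
        ≤ Real.exp (-(c * x)) * (Real.exp (c * x) * (U (Set.Ioc (x - h) x)).toReal) :=
          mul_le_mul_of_nonneg_left this (Real.exp_pos _).le
      _ = (U (Set.Ioc (x - h) x)).toReal := by
          rw [← mul_assoc, ← Real.exp_add]
          simp
  -- the lower bound on the remainder
  have hrem_ge : ∀ h x : ℝ,
      Real.exp (-(c * h)) * (U (Set.Ioc (x - h) x)).toReal
        ≤ Real.exp (-(c * x)) * ∫ y in Set.Ioc (x - h) x, Real.exp (c * y) ∂U := by
    intro h x
    have := bw_le_int_Ioc U hc (a := x - h) (b := x)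
    calc Real.exp (-(c * h)) * (U (Set.Ioc (x - h) x)).toReal
        = Real.exp (-(c * x)) * (Real.exp (c * (x - h)) * (U (Set.Ioc (x - h) x)).toReal) := by
          rw [← mul_assoc, ← Real.exp_add]; ring_nf
      _ ≤ Real.exp (-(c * x)) * ∫ y in Set.Ioc (x - h) x, Real.exp (c * y) ∂U :=
          mul_le_mul_of_nonneg_left this (Real.exp_pos _).le
  -- uniform bound on unit block masses
  obtain ⟨T₀, hT₀⟩ : ∃ T₀ : ℝ, ∀ t ≥ T₀, (U (Set.Ioc t (t + 1))).toReal ≤ 1 / m + 1 := by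
    have h1 : ∀ᶠ t in (atTop : Filter ℝ), (U (Set.Ioc t (t + 1))).toReal ≤ 1 / m + 1 :=
      (hBlackwell 1 one_pos).eventually (eventually_le_nhds (by linarith))
    exact eventually_atTop.1 h1
  set B : ℝ := max (1 / m + 1) (U (Set.Icc 0 (T₀ + 1))).toReal with hBdef
  have hB0 : 0 ≤ B := le_trans (by positivity) (le_max_left _ _)
  have hB : ∀ t : ℝ, (U (Set.Ioc t (t + 1))).toReal ≤ B := by
    intro t
    rcases le_or_gt T₀ t with h | h
    · exact le_trans (hT₀ t h) (le_max_left _ _)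
    · refine le_trans ?_ (le_max_right _ _)
      apply ENNReal.toReal_mono (bw_fin_Icc U 0 (T₀ + 1)).ne
      calc U (Set.Ioc t (t + 1)) ≤ U (Set.Iio 0 ∪ Set.Icc 0 (T₀ + 1)) := by
            apply measure_mono
            intro y hy
            rcases lt_or_ge y 0 with hy0 | hy0
            · exact Or.inl hy0
            · exact Or.inr ⟨hy0, le_trans hy.2 (by linarith)⟩
        _ ≤ U (Set.Iio 0) + U (Set.Icc 0 (T₀ + 1)) := measure_union_le _ _
        _ = U (Set.Icc 0 (T₀ + 1)) := by rw [hU0, zero_add]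
  -- global bound on g
  have hec1 : Real.exp (-c) < 1 := Real.exp_lt_one_iff.2 (by linarith)
  have hec0 : (0:ℝ) < 1 - Real.exp (-c) := by linarith
  set C₀ : ℝ := (U (Set.Icc 0 1)).toReal with hC₀def
  have hC₀0 : 0 ≤ C₀ := ENNReal.toReal_nonneg
  set K : ℝ := C₀ + B / (1 - Real.exp (-c)) with hKdef
  have hK0 : 0 ≤ K := by positivity
  have hgK : ∀ x, g x ≤ K := by
    have main : ∀ n : ℕ, ∀ x : ℝ, x ≤ (n : ℝ) + 1 → g x ≤ K := by
      intro n
      induction n with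
      | zero =>
        intro x hx
        rcases lt_or_ge x 0 with hx0 | hx0
        · have : Set.Icc (0:ℝ) x = ∅ := Set.Icc_eq_empty (by linarith)
          simp only [hgdef, this, Measure.restrict_empty, integral_zero_measure, mul_zero]
          exact hK0
        · have h1 : g x ≤ Real.exp (-(c * x)) * (Real.exp (c * x) * (U (Set.Icc 0 x)).toReal) :=
            mul_le_mul_of_nonneg_left (bw_int_Icc_le U hc hx0) (Real.exp_pos _).le
          have h2 : Real.exp (-(c * x)) * (Real.exp (c * x) * (U (Set.Icc 0 x)).toReal)
              = (U (Set.Icc 0 x)).toReal := by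
            rw [← mul_assoc, ← Real.exp_add]; simp
          have hx1 : x ≤ 1 := by push_cast at hx; linarith
          have h3 : (U (Set.Icc 0 x)).toReal ≤ C₀ := by
            apply ENNReal.toReal_mono (bw_fin_Icc U 0 1).ne
            exact measure_mono (Set.Icc_subset_Icc le_rfl hx1)
          have h4 : C₀ ≤ K := by
            rw [hKdef]
            have : 0 ≤ B / (1 - Real.exp (-c)) := by positivity
            linarith
          linarith [h1, h2 ▸ h1]
      | succ n ih =>
        intro x hx
        rcases le_or_gt x ((n : ℝ) + 1) with hle | hgt
        · exact ih x hle
        · have hx1 : 0 ≤ x - 1 := by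
            have : (0:ℝ) ≤ (n : ℝ) := Nat.cast_nonneg n
            linarith
          have hrec := hsplit 1 x zero_le_one hx1
          have hg1 : g (x - 1) ≤ K := by
            apply ih
            push_cast at hx ⊢
            linarith
          have hr : Real.exp (-(c * x)) * (∫ y in Set.Ioc (x - 1) x, Real.exp (c * y) ∂U) ≤ B := by
            refine le_trans (hrem_le 1 x) ?_
            have := hB (x - 1)
            rwa [sub_add_cancel] at this
          have hexp : Real.exp (-(c * 1)) = Real.exp (-c) := by norm_num
          rw [hrec, hexp]
          have h5 : Real.exp (-c) * g (x - 1) ≤ Real.exp (-c) * K :=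
            mul_le_mul_of_nonneg_left hg1 (Real.exp_pos _).le
          have h6 : Real.exp (-c) * K + B ≤ K := by
            rw [hKdef]
            have hBe : Real.exp (-c) * (B / (1 - Real.exp (-c))) + B = B / (1 - Real.exp (-c)) := by
              field_simp
              ring
            nlinarith [Real.exp_pos (-c), hC₀0]
          linarith
    intro x
    exact main ⌈x⌉₊ x (le_trans (Nat.le_ceil x) (by simp))
  -- boundedness of g along atTop
  have hbdd : IsBoundedUnder (· ≤ ·) (atTop : Filter ℝ) g := isBoundedUnder_of ⟨K, hgK⟩
  have hbdd' : IsBoundedUnder (· ≥ ·) (atTop : Filter ℝ) g := isBoundedUnder_of ⟨0, hg0⟩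
  have hcob : IsCoboundedUnder (· ≤ ·) (atTop : Filter ℝ) g := hbdd'.isCoboundedUnder_le
  have hcob' : IsCoboundedUnder (· ≥ ·) (atTop : Filter ℝ) g := hbdd.isCoboundedUnder_ge
  set Lp : ℝ := limsup g atTop with hLp
  set Lm : ℝ := liminf g atTop with hLm
  -- Blackwell along the shifted blocks
  have hBl : ∀ h : ℝ, 0 < h →
      Tendsto (fun x : ℝ => (U (Set.Ioc (x - h) x)).toReal) atTop (𝓝 (h / m)) := by
    intro h hh
    have hcomp := (hBlackwell h hh).comp (tendsto_atTop_add_const_right atTop (-h) tendsto_id)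
    convert hcomp using 2 with x
    simp [sub_add_cancel, sub_eq_add_neg]
  -- Claim A : limsup bound
  have claimA : ∀ h : ℝ, 0 < h → Lp * (1 - Real.exp (-(c * h))) ≤ h / m := by
    intro h hh
    have key : ∀ ε : ℝ, 0 < ε →
        Lp ≤ Real.exp (-(c * h)) * (Lp + ε) + (h / m + ε) := by
      intro ε hε
      apply limsup_le_of_le hcob
      have e1 : ∀ᶠ y in (atTop : Filter ℝ), g y < Lp + ε :=
        eventually_lt_of_limsup_lt (by linarith) hbdd
      have ht : Tendsto (fun x : ℝ => x - h) atTop atTop := by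
        simpa [sub_eq_add_neg] using tendsto_atTop_add_const_right (atTop : Filter ℝ) (-h)
          (tendsto_id (α := ℝ))
      have e2 : ∀ᶠ x in (atTop : Filter ℝ), g (x - h) < Lp + ε := ht.eventually e1
      have e3 : ∀ᶠ x in (atTop : Filter ℝ),
          (U (Set.Ioc (x - h) x)).toReal ≤ h / m + ε :=
        (hBl h hh).eventually (eventually_le_nhds (by linarith))
      have e4 : ∀ᶠ x in (atTop : Filter ℝ), 0 ≤ x - h := by
        filter_upwards [eventually_ge_atTop h] with x hx
        linarith
      filter_upwards [e2, e3, e4] with x h2 h3 h4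
      rw [hsplit h x hh.le h4]
      have r1 : Real.exp (-(c * h)) * g (x - h) ≤ Real.exp (-(c * h)) * (Lp + ε) :=
        mul_le_mul_of_nonneg_left h2.le (Real.exp_pos _).le
      have r2 := le_trans (hrem_le h x) h3
      linarith
    apply le_of_forall_pos_le_add
    intro δ hδ
    have hpos : (0:ℝ) < Real.exp (-(c * h)) + 1 := by positivity
    have := key (δ / (Real.exp (-(c * h)) + 1)) (by positivity)
    have hδε : (δ / (Real.exp (-(c * h)) + 1)) * (Real.exp (-(c * h)) + 1) = δ := by
      field_simp
    nlinarith [this]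
  -- Claim B : liminf bound
  have claimB : ∀ h : ℝ, 0 < h →
      Real.exp (-(c * h)) * (h / m) ≤ Lm * (1 - Real.exp (-(c * h))) := by
    intro h hh
    have key : ∀ ε : ℝ, 0 < ε →
        Real.exp (-(c * h)) * (Lm - ε) + Real.exp (-(c * h)) * (h / m - ε) ≤ Lm := by
      intro ε hε
      apply le_liminf_of_le hcob'
      have e1 : ∀ᶠ y in (atTop : Filter ℝ), Lm - ε < g y :=
        eventually_lt_of_lt_liminf (by linarith) hbdd'
      have ht : Tendsto (fun x : ℝ => x - h) atTop atTop := by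
        simpa [sub_eq_add_neg] using tendsto_atTop_add_const_right (atTop : Filter ℝ) (-h)
          (tendsto_id (α := ℝ))
      have e2 : ∀ᶠ x in (atTop : Filter ℝ), Lm - ε < g (x - h) := ht.eventually e1
      have e3 : ∀ᶠ x in (atTop : Filter ℝ),
          h / m - ε ≤ (U (Set.Ioc (x - h) x)).toReal :=
        (hBl h hh).eventually (eventually_ge_nhds (by linarith))
      have e4 : ∀ᶠ x in (atTop : Filter ℝ), 0 ≤ x - h := by
        filter_upwards [eventually_ge_atTop h] with x hx
        linarith
      filter_upwards [e2, e3, e4] with x h2 h3 h4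
      rw [hsplit h x hh.le h4]
      have r1 : Real.exp (-(c * h)) * (Lm - ε) ≤ Real.exp (-(c * h)) * g (x - h) :=
        mul_le_mul_of_nonneg_left h2.le (Real.exp_pos _).le
      have r2 : Real.exp (-(c * h)) * (h / m - ε)
          ≤ Real.exp (-(c * h)) * (U (Set.Ioc (x - h) x)).toReal :=
        mul_le_mul_of_nonneg_left h3 (Real.exp_pos _).le
      linarith [hrem_ge h x]
    apply le_of_forall_pos_le_add
    intro δ hδ
    have hpos : (0:ℝ) < 2 * Real.exp (-(c * h)) := by positivity
    have := key (δ / (2 * Real.exp (-(c * h)))) (by positivity)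
    have hδε : (δ / (2 * Real.exp (-(c * h)))) * (2 * Real.exp (-(c * h))) = δ := by
      field_simp
    nlinarith [this]
  -- the derivative limit : (1 - e^{-ch})/h → c as h → 0
  have hder : Tendsto (fun h : ℝ => (1 - Real.exp (-(c * h))) / h) (𝓝[>] 0) (𝓝 c) := by
    have h1 : HasDerivAt (fun h : ℝ => -(c * h)) (-c) 0 := by
      simpa [neg_mul] using (hasDerivAt_id (0:ℝ)).const_mul (-c)
    have h2 : HasDerivAt (fun h : ℝ => Real.exp (-(c * h)))
        (Real.exp (-(c * 0)) * (-c)) 0 := h1.exp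
    have h3 : HasDerivAt (fun h : ℝ => 1 - Real.exp (-(c * h))) c 0 := by
      have := (hasDerivAt_const (0:ℝ) (1:ℝ)).sub h2
      simp at this; exact this
    have h4 := hasDerivAt_iff_tendsto_slope.1 h3
    have h5 : Tendsto (slope (fun h : ℝ => 1 - Real.exp (-(c * h))) 0) (𝓝[>] 0) (𝓝 c) :=
      h4.mono_left (nhdsWithin_mono 0 fun y hy => ne_of_gt hy)
    apply h5.congr'
    filter_upwards [self_mem_nhdsWithin] with h (hh : (0:ℝ) < h)
    rw [slope_def_field]
    simp [div_eq_div_iff (ne_of_gt hh)]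
  have hne : (1:ℝ) / m * c⁻¹ = 1 / (c * m) := by
    field_simp
  -- limit of upper envelope
  have hpsi : Tendsto (fun h : ℝ => h / (m * (1 - Real.exp (-(c * h))))) (𝓝[>] 0)
      (𝓝 (1 / (c * m))) := by
    have h1 : Tendsto (fun h : ℝ => (1 / m) * ((1 - Real.exp (-(c * h))) / h)⁻¹) (𝓝[>] 0)
        (𝓝 ((1 / m) * c⁻¹)) := (hder.inv₀ (ne_of_gt hc)).const_mul (1 / m)
    rw [hne] at h1
    apply h1.congr'
    filter_upwards [self_mem_nhdsWithin] with h (hh : (0:ℝ) < h)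
    have he : Real.exp (-(c * h)) < 1 := Real.exp_lt_one_iff.2 (by nlinarith)
    have h1e : (0:ℝ) < 1 - Real.exp (-(c * h)) := by linarith
    field_simp
  have hone : Tendsto (fun h : ℝ => Real.exp (-(c * h))) (𝓝[>] 0) (𝓝 1) := by
    have : Continuous (fun h : ℝ => Real.exp (-(c * h))) :=
      Real.continuous_exp.comp ((continuous_const.mul continuous_id).neg)
    have := this.tendsto 0
    simp only [mul_zero, neg_zero, Real.exp_zero] at this
    exact this.mono_left nhdsWithin_le_nhds
  -- limsup ≤ 1/(cm)
  have hsup : Lp ≤ 1 / (c * m) := by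
    apply ge_of_tendsto hpsi
    filter_upwards [self_mem_nhdsWithin] with h (hh : (0:ℝ) < h)
    have he : Real.exp (-(c * h)) < 1 := Real.exp_lt_one_iff.2 (by nlinarith)
    have h1e : (0:ℝ) < 1 - Real.exp (-(c * h)) := by linarith
    rw [le_div_iff₀ (by positivity)]
    have := claimA h hh
    calc Lp * (m * (1 - Real.exp (-(c * h)))) = Lp * (1 - Real.exp (-(c * h))) * m := by ring
      _ ≤ h := (le_div_iff₀ hm).mp this
  -- liminf ≥ 1/(cm)
  have hinf : 1 / (c * m) ≤ Lm := by
    have hpsi' : Tendsto (fun h : ℝ =>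
        Real.exp (-(c * h)) * (h / (m * (1 - Real.exp (-(c * h)))))) (𝓝[>] 0)
        (𝓝 (1 / (c * m))) := by
      have := hone.mul hpsi
      simpa using this
    apply le_of_tendsto hpsi'
    filter_upwards [self_mem_nhdsWithin] with h (hh : (0:ℝ) < h)
    have he : Real.exp (-(c * h)) < 1 := Real.exp_lt_one_iff.2 (by nlinarith)
    have h1e : (0:ℝ) < 1 - Real.exp (-(c * h)) := by linarith
    have heq : Real.exp (-(c * h)) * (h / (m * (1 - Real.exp (-(c * h)))))
        = (Real.exp (-(c * h)) * (h / m)) / (1 - Real.exp (-(c * h))) := by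
      field_simp
    rw [heq, div_le_iff₀ h1e]
    exact claimB h hh
  exact tendsto_of_le_liminf_of_limsup_le hinf hsup hbdd hbdd'
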